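/- Let f : I → ℝ be twice differentiable on the interior of an interval I, and suppose d ≤ f''(t) ≤ D for all t in the interior of I. Then for all a, b in the interior of I and ν ∈ [0,1]: (1/2)·ν·(1−ν)·d·(b−a)² ≤ (1−ν)·f(a) + ν·f(b) − f((1−ν)·a + ν·b) ≤ (1/2)·ν·(1−ν)·D·(b−a)². -/

import Mathlib

lemma aux_convex (s : Set ℝ) (hso : IsOpen s) (hs : Convex ℝ s) (g g' g'' : ℝ → ℝ)
    (hg : ∀ t ∈ s, HasDerivAt g (g' t) t) (hg' : ∀ t ∈ s, HasDerivAt g' (g'' t) t)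
    (hpos : ∀ t ∈ s, 0 ≤ g'' t) : ConvexOn ℝ s g := by
  have hint : interior s = s := hso.interior_eq
  have hmono : MonotoneOn g' s := by
    apply monotoneOn_of_deriv_nonneg hs
    · exact fun t ht => ((hg' t ht).continuousAt).continuousWithinAt
    · rw [hint]; exact fun t ht => (hg' t ht).differentiableAt.differentiableWithinAt
    · intro t ht
      rw [hint] at ht
      rw [(hg' t ht).deriv]
      exact hpos t ht
  apply MonotoneOn.convexOn_of_deriv hs
  · exact fun t ht => (hg t ht).continuousAt.continuousWithinAt
  · rw [hint]; exact fun t ht => (hg t ht).differentiableAt.differentiableWithinAt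
  · rw [hint]
    intro x hx y hy hxy
    rw [(hg x hx).deriv, (hg y hy).deriv]
    exact hmono hx hy hxy

theorem stmt_0 (I : Set ℝ) (hI : I.OrdConnected) (f f' f'' : ℝ → ℝ)
    (hf : ∀ t ∈ interior I, HasDerivAt f (f' t) t)
    (hf' : ∀ t ∈ interior I, HasDerivAt f' (f'' t) t)
    (d D : ℝ) (hd : ∀ t ∈ interior I, d ≤ f'' t) (hD : ∀ t ∈ interior I, f'' t ≤ D)
    (a b : ℝ) (ha : a ∈ interior I) (hb : b ∈ interior I)
    (ν : ℝ) (hν : ν ∈ Set.Icc (0:ℝ) 1) :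
    1/2 * ν * (1 - ν) * d * (b - a)^2 ≤ (1 - ν) * f a + ν * f b - f ((1 - ν) * a + ν * b) ∧
    (1 - ν) * f a + ν * f b - f ((1 - ν) * a + ν * b) ≤ 1/2 * ν * (1 - ν) * D * (b - a)^2 := by
  obtain ⟨hν0, hν1⟩ := hν
  have hIconv : Convex ℝ (interior I) := (convex_iff_ordConnected.mpr hI).interior
  have hIopen : IsOpen (interior I) := isOpen_interior
  constructor
  · -- lower bound: g x = f x - d/2 x^2 is convex
    have hcv : ConvexOn ℝ (interior I) (fun x => f x - d/2 * x^2) := by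
      apply aux_convex _ hIopen hIconv _ (fun x => f' x - d * x) (fun x => f'' x - d)
      · intro t ht
        have : HasDerivAt (fun x : ℝ => d/2 * x^2) (d * t) t := by
          have := (hasDerivAt_pow 2 t).const_mul (d/2)
          refine this.congr_deriv ?_; push_cast; ring
        exact (hf t ht).sub this
      · intro t ht
        have : HasDerivAt (fun x : ℝ => d * x) d t := by simpa using (hasDerivAt_id t).const_mul d
        exact (hf' t ht).sub this
      · intro t ht; linarith [hd t ht]
    have key := hcv.2 ha hb (by linarith : (0:ℝ) ≤ 1 - ν) hν0 (by ring)
    simp only [smul_eq_mul] at key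
    nlinarith [key]
  · have hcv : ConvexOn ℝ (interior I) (fun x => D/2 * x^2 - f x) := by
      apply aux_convex _ hIopen hIconv _ (fun x => D * x - f' x) (fun x => D - f'' x)
      · intro t ht
        have h2 : HasDerivAt (fun x : ℝ => D/2 * x^2) (D * t) t := by
          have := (hasDerivAt_pow 2 t).const_mul (D/2)
          refine this.congr_deriv ?_; push_cast; ring
        exact h2.sub (hf t ht)
      · intro t ht
        have : HasDerivAt (fun x : ℝ => D * x) D t := by simpa using (hasDerivAt_id t).const_mul D
        exact this.sub (hf' t ht)
      · intro t ht; linarith [hD t ht]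
    have key := hcv.2 ha hb (by linarith : (0:ℝ) ≤ 1 - ν) hν0 (by ring)
    simp only [smul_eq_mul] at key
    nlinarith [key]
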